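/- Let ∇ ⊂ ℝ⁴ be the Birkhoff-type polytope defined by x,y,z,w ≥ 0, x ≤ z+w ≤ 1, z ≤ x+y ≤ 1, y+w ≤ 1. For every positive integer n, the number of lattice points in n∇ equals C(n+4,4) + C(n+3,4) + C(n+2,4) = (3n⁴ + 18n³ + 45n² + 54n + 24)/24. -/

import Mathlib

open Pointwise

def nabla : Set (ℝ × ℝ × ℝ × ℝ) :=
  {p : ℝ × ℝ × ℝ × ℝ |
    0 ≤ p.1 ∧
    0 ≤ p.2.1 ∧
    0 ≤ p.2.2.1 ∧
    0 ≤ p.2.2.2 ∧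
    p.1 ≤ p.2.2.1 + p.2.2.2 ∧
    p.2.2.1 + p.2.2.2 ≤ 1 ∧
    p.2.2.1 ≤ p.1 + p.2.1 ∧
    p.1 + p.2.1 ≤ 1 ∧
    p.2.1 + p.2.2.2 ≤ 1}

namespace Stmt6Aux

open Finset

/-! ### Counting lattice points in standard simplices -/

def D2 (m : ℕ) : Finset (ℕ × ℕ) :=
  (range (m+1) ×ˢ range (m+1)).filter fun p => p.1 + p.2 ≤ m

def D3 (m : ℕ) : Finset (ℕ × ℕ × ℕ) :=
  (range (m+1) ×ˢ (range (m+1) ×ˢ range (m+1))).filter fun p => p.1 + p.2.1 + p.2.2 ≤ m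

def D4 (m : ℕ) : Finset (ℕ × ℕ × ℕ × ℕ) :=
  (range (m+1) ×ˢ (range (m+1) ×ˢ (range (m+1) ×ˢ range (m+1)))).filter
    fun p => p.1 + p.2.1 + p.2.2.1 + p.2.2.2 ≤ m

lemma mem_D2 {m : ℕ} {p : ℕ × ℕ} : p ∈ D2 m ↔ p.1 + p.2 ≤ m := by
  simp only [D2, mem_filter, mem_product, mem_range]; omega

lemma mem_D3 {m : ℕ} {p : ℕ × ℕ × ℕ} : p ∈ D3 m ↔ p.1 + p.2.1 + p.2.2 ≤ m := by
  simp only [D3, mem_filter, mem_product, mem_range]; omega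

lemma mem_D4 {m : ℕ} {p : ℕ × ℕ × ℕ × ℕ} :
    p ∈ D4 m ↔ p.1 + p.2.1 + p.2.2.1 + p.2.2.2 ≤ m := by
  simp only [D4, mem_filter, mem_product, mem_range]; omega

lemma cardD2 (m : ℕ) : (D2 m).card = (m+2).choose 2 := by
  rw [card_eq_sum_card_fiberwise (f := fun p => p.1) (t := range (m+1))
    (fun p hp => by rw [mem_coe, mem_D2] at hp; simp only [mem_coe, mem_range]; omega)]
  have hfib : ∀ a ∈ range (m+1), ((D2 m).filter fun p => p.1 = a).card = (m - a + 1).choose 1 := by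
    intro a ha
    rw [mem_range] at ha
    rw [Nat.choose_one_right, show m - a + 1 = (range (m - a + 1)).card from (card_range _).symm]
    apply card_nbij (i := Prod.snd)
    · intro p hp; simp only [mem_coe, mem_filter, mem_D2] at hp; simp only [mem_coe, mem_range]; omega
    · intro p hp q hq h
      simp only [coe_filter, Set.mem_setOf_eq, mem_D2] at hp hq
      rw [Prod.ext_iff]; exact ⟨by omega, h⟩
    · intro b hb
      simp only [mem_coe, mem_range] at hb
      exact ⟨(a, b), mem_coe.2 (mem_filter.2 ⟨mem_D2.2 (by omega), rfl⟩), rfl⟩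
  rw [sum_congr rfl hfib]
  have h := Finset.sum_range_reflect (fun j => (j + 1).choose 1) (m+1)
  simp only [Nat.add_sub_cancel] at h
  rw [h, Nat.sum_range_add_choose m 1]

lemma cardD3 (m : ℕ) : (D3 m).card = (m+3).choose 3 := by
  rw [card_eq_sum_card_fiberwise (f := fun p => p.1) (t := range (m+1))
    (fun p hp => by rw [mem_coe, mem_D3] at hp; simp only [mem_coe, mem_range]; omega)]
  have hfib : ∀ a ∈ range (m+1), ((D3 m).filter fun p => p.1 = a).card = (m - a + 2).choose 2 := by
    intro a ha
    rw [mem_range] at ha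
    rw [← cardD2 (m - a)]
    apply card_nbij (i := Prod.snd)
    · intro p hp; simp only [mem_coe, mem_filter, mem_D3] at hp; rw [mem_coe, mem_D2]; omega
    · intro p hp q hq h
      simp only [coe_filter, Set.mem_setOf_eq, mem_D3] at hp hq
      rw [Prod.ext_iff]; exact ⟨by omega, h⟩
    · intro b hb
      simp only [mem_coe, mem_D2] at hb
      exact ⟨(a, b), mem_coe.2 (mem_filter.2
        ⟨mem_D3.2 (show a + b.1 + b.2 ≤ m by omega), rfl⟩), rfl⟩
  rw [sum_congr rfl hfib]
  have h := Finset.sum_range_reflect (fun j => (j + 2).choose 2) (m+1)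
  simp only [Nat.add_sub_cancel] at h
  rw [h, Nat.sum_range_add_choose m 2]

lemma cardD4 (m : ℕ) : (D4 m).card = (m+4).choose 4 := by
  rw [card_eq_sum_card_fiberwise (f := fun p => p.1) (t := range (m+1))
    (fun p hp => by rw [mem_coe, mem_D4] at hp; simp only [mem_coe, mem_range]; omega)]
  have hfib : ∀ a ∈ range (m+1), ((D4 m).filter fun p => p.1 = a).card = (m - a + 3).choose 3 := by
    intro a ha
    rw [mem_range] at ha
    rw [← cardD3 (m - a)]
    apply card_nbij (i := Prod.snd)
    · intro p hp; simp only [mem_coe, mem_filter, mem_D4] at hp; rw [mem_coe, mem_D3]; omega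
    · intro p hp q hq h
      simp only [coe_filter, Set.mem_setOf_eq, mem_D4] at hp hq
      rw [Prod.ext_iff]; exact ⟨by omega, h⟩
    · intro b hb
      simp only [mem_coe, mem_D3] at hb
      exact ⟨(a, b), mem_coe.2 (mem_filter.2
        ⟨mem_D4.2 (show a + b.1 + b.2.1 + b.2.2 ≤ m by omega), rfl⟩), rfl⟩
  rw [sum_congr rfl hfib]
  have h := Finset.sum_range_reflect (fun j => (j + 3).choose 3) (m+1)
  simp only [Nat.add_sub_cancel] at h
  rw [h, Nat.sum_range_add_choose m 3]

/-! ### The lattice points of `n∇` as a finite set -/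

noncomputable def Sfin (n : ℕ) : Finset (ℤ × ℤ × ℤ × ℤ) :=
  (Finset.Icc (0, 0, 0, 0) ((n:ℤ), (n:ℤ), (n:ℤ), (n:ℤ))).filter fun v =>
    0 ≤ v.1 ∧ 0 ≤ v.2.1 ∧ 0 ≤ v.2.2.1 ∧ 0 ≤ v.2.2.2 ∧
    v.1 ≤ v.2.2.1 + v.2.2.2 ∧ v.2.2.1 + v.2.2.2 ≤ (n:ℤ) ∧
    v.2.2.1 ≤ v.1 + v.2.1 ∧ v.1 + v.2.1 ≤ (n:ℤ) ∧ v.2.1 + v.2.2.2 ≤ (n:ℤ)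

lemma mem_Sfin {n : ℕ} {v : ℤ × ℤ × ℤ × ℤ} :
    v ∈ Sfin n ↔ (0 ≤ v.1 ∧ 0 ≤ v.2.1 ∧ 0 ≤ v.2.2.1 ∧ 0 ≤ v.2.2.2 ∧
      v.1 ≤ v.2.2.1 + v.2.2.2 ∧ v.2.2.1 + v.2.2.2 ≤ (n:ℤ) ∧
      v.2.2.1 ≤ v.1 + v.2.1 ∧ v.1 + v.2.1 ≤ (n:ℤ) ∧ v.2.1 + v.2.2.2 ≤ (n:ℤ)) := by
  simp only [Sfin, mem_filter, Finset.mem_Icc, Prod.le_def]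
  omega

lemma mem_iff (n : ℕ) (hn : 0 < n) (x y z w : ℤ) :
    ((x:ℝ), (y:ℝ), (z:ℝ), (w:ℝ)) ∈ (n:ℝ) • nabla ↔
      (0 ≤ x ∧ 0 ≤ y ∧ 0 ≤ z ∧ 0 ≤ w ∧ x ≤ z + w ∧ z + w ≤ (n:ℤ) ∧
        z ≤ x + y ∧ x + y ≤ (n:ℤ) ∧ y + w ≤ (n:ℤ)) := by
  have hn' : (0:ℝ) < n := by exact_mod_cast hn
  constructor
  · intro hv
    rw [Set.mem_smul_set] at hv
    obtain ⟨⟨p1, p2, p3, p4⟩, hp, hpe⟩ := hv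
    simp only [nabla, Set.mem_setOf_eq] at hp
    obtain ⟨h1, h2, h3, h4, h5, h6, h7, h8, h9⟩ := hp
    simp only [Prod.smul_mk, smul_eq_mul, Prod.mk.injEq] at hpe
    obtain ⟨e1, e2, e3, e4⟩ := hpe
    refine ⟨?_, ?_, ?_, ?_, ?_, ?_, ?_, ?_, ?_⟩
    · exact_mod_cast show (0:ℝ) ≤ (x:ℝ) by nlinarith
    · exact_mod_cast show (0:ℝ) ≤ (y:ℝ) by nlinarith
    · exact_mod_cast show (0:ℝ) ≤ (z:ℝ) by nlinarith
    · exact_mod_cast show (0:ℝ) ≤ (w:ℝ) by nlinarith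
    · exact_mod_cast show (x:ℝ) ≤ (z:ℝ) + (w:ℝ) by nlinarith
    · exact_mod_cast show (z:ℝ) + (w:ℝ) ≤ (n:ℝ) by nlinarith
    · exact_mod_cast show (z:ℝ) ≤ (x:ℝ) + (y:ℝ) by nlinarith
    · exact_mod_cast show (x:ℝ) + (y:ℝ) ≤ (n:ℝ) by nlinarith
    · exact_mod_cast show (y:ℝ) + (w:ℝ) ≤ (n:ℝ) by nlinarith
  · rintro ⟨h1, h2, h3, h4, h5, h6, h7, h8, h9⟩
    rw [Set.mem_smul_set]
    refine ⟨((x:ℝ)/n, (y:ℝ)/n, (z:ℝ)/n, (w:ℝ)/n),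
      ⟨?_, ?_, ?_, ?_, ?_, ?_, ?_, ?_, ?_⟩, ?_⟩
    · exact div_nonneg (by exact_mod_cast h1) hn'.le
    · exact div_nonneg (by exact_mod_cast h2) hn'.le
    · exact div_nonneg (by exact_mod_cast h3) hn'.le
    · exact div_nonneg (by exact_mod_cast h4) hn'.le
    · rw [← add_div, div_le_div_iff_of_pos_right hn']
      exact_mod_cast h5
    · rw [← add_div, div_le_one hn']
      exact_mod_cast h6
    · rw [← add_div, div_le_div_iff_of_pos_right hn']
      exact_mod_cast h7
    · rw [← add_div, div_le_one hn']
      exact_mod_cast h8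
    · rw [← add_div, div_le_one hn']
      exact_mod_cast h9
    · simp only [Prod.smul_mk, smul_eq_mul, Prod.mk.injEq]
      refine ⟨?_, ?_, ?_, ?_⟩ <;> field_simp

/-! ### The three classes of the half-open decomposition -/

def pA (n : ℕ) (v : ℤ × ℤ × ℤ × ℤ) : Prop :=
  v.1 ≤ v.2.2.1 ∧ v.1 + v.2.1 + v.2.2.2 ≤ (n:ℤ)

def pB (n : ℕ) (v : ℤ × ℤ × ℤ × ℤ) : Prop :=
  v.2.2.1 < v.1 ∧ v.2.2.1 + v.2.1 + v.2.2.2 ≤ (n:ℤ)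

instance (n : ℕ) : DecidablePred (pA n) := fun v => by unfold pA; infer_instance
instance (n : ℕ) : DecidablePred (pB n) := fun v => by unfold pB; infer_instance

lemma cardA (n : ℕ) : ((Sfin n).filter (pA n)).card = (D4 n).card := by
  apply card_nbij (i := fun v =>
    (v.1.toNat, (v.2.1 - v.2.2.1 + v.1).toNat, v.2.2.2.toNat, (v.2.2.1 - v.1).toNat))
  · intro v hv
    simp only [mem_coe, mem_filter, mem_Sfin, pA] at hv
    exact mem_D4.2 (show v.1.toNat + (v.2.1 - v.2.2.1 + v.1).toNat + v.2.2.2.toNat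
      + (v.2.2.1 - v.1).toNat ≤ n by omega)
  · intro v1 h1 v2 h2 he
    simp only [mem_coe, mem_filter, mem_Sfin, pA] at h1 h2
    simp only [Prod.mk.injEq] at he
    rw [Prod.ext_iff, Prod.ext_iff, Prod.ext_iff]
    omega
  · rintro ⟨b1, b2, b3, b4⟩ hb
    simp only [mem_coe, mem_D4] at hb
    refine ⟨((b1:ℤ), ((b2:ℤ) + (b4:ℤ)), ((b1:ℤ) + (b4:ℤ)), (b3:ℤ)), ?_, ?_⟩
    · simp only [mem_coe, mem_filter, mem_Sfin, pA]
      omega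
    · simp only [Prod.mk.injEq]
      omega

lemma cardB (n : ℕ) (hn : 0 < n) :
    (((Sfin n).filter fun a => ¬ pA n a).filter (pB n)).card = (D4 (n-1)).card := by
  apply card_nbij (i := fun v =>
    (v.2.2.1.toNat, v.2.1.toNat, (v.2.2.2 - v.1 + v.2.2.1).toNat, (v.1 - v.2.2.1 - 1).toNat))
  · intro v hv
    simp only [mem_coe, mem_filter, mem_Sfin] at hv; simp only [pA, pB] at hv
    exact mem_D4.2 (show v.2.2.1.toNat + v.2.1.toNat + (v.2.2.2 - v.1 + v.2.2.1).toNat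
      + (v.1 - v.2.2.1 - 1).toNat ≤ n - 1 by omega)
  · intro v1 h1 v2 h2 he
    simp only [mem_coe, mem_filter, mem_Sfin] at h1 h2; simp only [pA, pB] at h1 h2
    simp only [Prod.mk.injEq] at he
    rw [Prod.ext_iff, Prod.ext_iff, Prod.ext_iff]
    omega
  · rintro ⟨b1, b2, b3, b4⟩ hb
    simp only [mem_coe, mem_D4] at hb
    refine ⟨(((b1:ℤ) + (b4:ℤ) + 1), (b2:ℤ), (b1:ℤ), ((b3:ℤ) + (b4:ℤ) + 1)), ?_, ?_⟩
    · simp only [mem_coe, mem_filter, mem_Sfin]; simp only [pA, pB]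
      omega
    · simp only [Prod.mk.injEq]
      omega

lemma cardC (n : ℕ) (hn : 0 < n) :
    (((Sfin n).filter fun a => ¬ pA n a).filter fun a => ¬ pB n a).card = (n+2).choose 4 := by
  rcases Nat.lt_or_ge n 2 with h2 | h2
  · have hn1 : n = 1 := by omega
    subst hn1
    rw [show ((1:ℕ)+2).choose 4 = 0 from rfl, Finset.card_eq_zero, Finset.filter_eq_empty_iff]
    intro v hv
    simp only [mem_filter, mem_Sfin] at hv; simp only [pA] at hv
    simp only [pB, not_and, not_lt, not_le]
    omega
  · obtain ⟨m, rfl⟩ := Nat.exists_eq_add_of_le h2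
    rw [show (2+m+2) = m+4 by omega, ← cardD4 m]
    apply card_nbij (i := fun v =>
      ((((2+m:ℕ):ℤ) - v.2.1 - v.2.2.2).toNat, (((2+m:ℕ):ℤ) - v.2.2.1 - v.2.2.2).toNat,
       (((2+m:ℕ):ℤ) - v.1 - v.2.1).toNat, (v.1 + v.2.1 + v.2.2.2 - ((2+m:ℕ):ℤ) - 1).toNat))
    · intro v hv
      simp only [mem_coe, mem_filter, mem_Sfin] at hv; simp only [pA, pB] at hv
      obtain ⟨⟨hm1, hpa⟩, hpb⟩ := hv
      have k1 : ((2+m:ℕ):ℤ) < v.1 + v.2.1 + v.2.2.2 ∧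
          ((2+m:ℕ):ℤ) < v.2.2.1 + v.2.1 + v.2.2.2 := by omega
      clear hpa hpb
      exact mem_D4.2 (show (((2+m:ℕ):ℤ) - v.2.1 - v.2.2.2).toNat
        + (((2+m:ℕ):ℤ) - v.2.2.1 - v.2.2.2).toNat
        + (((2+m:ℕ):ℤ) - v.1 - v.2.1).toNat
        + (v.1 + v.2.1 + v.2.2.2 - ((2+m:ℕ):ℤ) - 1).toNat ≤ m by omega)
    · intro v1 h1 v2 h2 he
      simp only [mem_coe, mem_filter, mem_Sfin] at h1 h2; simp only [pA, pB] at h1 h2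
      obtain ⟨⟨hm1, hpa1⟩, hpb1⟩ := h1
      obtain ⟨⟨hm2, hpa2⟩, hpb2⟩ := h2
      have k1 : ((2+m:ℕ):ℤ) < v1.1 + v1.2.1 + v1.2.2.2 ∧
          ((2+m:ℕ):ℤ) < v1.2.2.1 + v1.2.1 + v1.2.2.2 := by omega
      have k2 : ((2+m:ℕ):ℤ) < v2.1 + v2.2.1 + v2.2.2.2 ∧
          ((2+m:ℕ):ℤ) < v2.2.2.1 + v2.2.1 + v2.2.2.2 := by omega
      clear hpa1 hpa2 hpb1 hpb2
      simp only [Prod.mk.injEq] at he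
      obtain ⟨e1, e2, e3, e4⟩ := he
      have f1 : v1.2.1 + v1.2.2.2 = v2.2.1 + v2.2.2.2 := by clear e2 e3 e4; omega
      have f2 : v1.2.2.1 + v1.2.2.2 = v2.2.2.1 + v2.2.2.2 := by clear e1 e3 e4; omega
      have f3 : v1.1 + v1.2.1 = v2.1 + v2.2.1 := by clear e1 e2 e4; omega
      have f4 : v1.1 + v1.2.1 + v1.2.2.2 = v2.1 + v2.2.1 + v2.2.2.2 := by
        clear e1 e2 e3; omega
      clear e1 e2 e3 e4
      rw [Prod.ext_iff, Prod.ext_iff, Prod.ext_iff]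
      omega
    · rintro ⟨b1, b2, b3, b4⟩ hb
      simp only [mem_coe, mem_D4] at hb
      refine ⟨(((b1:ℤ) + (b4:ℤ) + 1), ((m:ℤ)+1-b1-b3-b4), ((m:ℤ)+1-b2-b3-b4),
        ((b3:ℤ) + (b4:ℤ) + 1)), ?_, ?_⟩
      · simp only [mem_coe, mem_filter, mem_Sfin]; simp only [pA, pB]
        refine ⟨⟨by omega, by omega⟩, by omega⟩
      · simp only [Prod.mk.injEq]
        omega

/-! ### The binomial identity -/

lemma ch4 (n : ℕ) : (n+4).choose 4 * 24 = (n+1)*(n+2)*(n+3)*(n+4) := by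
  have h := Nat.choose_mul_factorial_mul_factorial (show 4 ≤ n + 4 by omega)
  have h2 : (n+4-4) = n := by omega
  rw [h2] at h
  have h3 : Nat.factorial (n+4) = (n+4)*(n+3)*(n+2)*(n+1)*(Nat.factorial n) := by
    show Nat.factorial ((n+3)+1) = _
    rw [Nat.factorial_succ, show n+3 = (n+2)+1 from rfl, Nat.factorial_succ,
      show (n+2) = (n+1)+1 from rfl, Nat.factorial_succ, Nat.factorial_succ]
    ring
  rw [h3, show Nat.factorial 4 = 24 from rfl] at h
  apply Nat.eq_of_mul_eq_mul_right (Nat.factorial_pos n)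
  rw [h]; ring

lemma ratid (n : ℕ) (hn : 0 < n) :
    ((Nat.choose (n + 4) 4 + Nat.choose (n + 3) 4 + Nat.choose (n + 2) 4 : ℚ))
        = (3 * (n : ℚ) ^ 4 + 18 * (n : ℚ) ^ 3 + 45 * (n : ℚ) ^ 2 + 54 * (n : ℚ) ^ 1 + 24) / 24 := by
  have e1 := ch4 n
  have e2 := ch4 (n-1)
  rw [show n-1+4 = n+3 by omega, show n-1+1 = n by omega, show n-1+2 = n+1 by omega,
    show n-1+3 = n+2 by omega] at e2
  have E1 : ((n+4).choose 4 : ℚ) * 24 = (n+1)*(n+2)*(n+3)*(n+4) := by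
    exact_mod_cast congrArg (Nat.cast (R := ℚ)) e1
  have E2 : ((n+3).choose 4 : ℚ) * 24 = n*(n+1)*(n+2)*(n+3) := by
    exact_mod_cast congrArg (Nat.cast (R := ℚ)) e2
  have E3 : ((n+2).choose 4 : ℚ) * 24 = ((n:ℚ)-1)*n*(n+1)*(n+2) := by
    rcases Nat.lt_or_ge n 2 with h | h
    · interval_cases n
      · norm_num
    · have e3 := ch4 (n-2)
      rw [show n-2+4 = n+2 by omega, show n-2+1 = n-1 by omega, show n-2+2 = n by omega,
        show n-2+3 = n+1 by omega] at e3
      have h5 := congrArg (Nat.cast (R := ℚ)) e3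
      push_cast [Nat.cast_sub (show 1 ≤ n by omega)] at h5
      linarith [h5]
  rw [eq_div_iff (by norm_num : (24:ℚ) ≠ 0)]
  linear_combination E1 + E2 + E3

end Stmt6Aux

open Stmt6Aux Finset in
theorem stmt6 (n : ℕ) (hn : 0 < n) :
    {v : ℤ × ℤ × ℤ × ℤ | (((v.1 : ℝ), (v.2.1 : ℝ), (v.2.2.1 : ℝ), (v.2.2.2 : ℝ)) : ℝ × ℝ × ℝ × ℝ) ∈ (n : ℝ) • nabla}.ncard
        = Nat.choose (n + 4) 4 + Nat.choose (n + 3) 4 + Nat.choose (n + 2) 4 ∧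
      ((Nat.choose (n + 4) 4 + Nat.choose (n + 3) 4 + Nat.choose (n + 2) 4 : ℚ))
        = (3 * (n : ℚ) ^ 4 + 18 * (n : ℚ) ^ 3 + 45 * (n : ℚ) ^ 2 + 54 * (n : ℚ) ^ 1 + 24) / 24 := by
  constructor
  · have hset : {v : ℤ × ℤ × ℤ × ℤ |
        (((v.1 : ℝ), (v.2.1 : ℝ), (v.2.2.1 : ℝ), (v.2.2.2 : ℝ)) : ℝ × ℝ × ℝ × ℝ) ∈ (n : ℝ) • nabla}
        = ↑(Sfin n) := by
      ext v
      simp only [Set.mem_setOf_eq, Finset.mem_coe, mem_iff n hn, mem_Sfin]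
    rw [hset, Set.ncard_coe_finset]
    have hsplit := card_filter_add_card_filter_not (s := Sfin n) (p := pA n)
    have hsplit2 := card_filter_add_card_filter_not
      (s := (Sfin n).filter fun a => ¬ pA n a) (p := pB n)
    rw [← hsplit, ← hsplit2, cardA n, cardB n hn, cardC n hn, cardD4 n, cardD4 (n-1),
      show n-1+4 = n+3 by omega]
    omega
  · exact ratid n hn
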